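/- Let F be a field of characteristic not 2 nor 3, and let III(−1, 1/2, α)^× be the 3-dimensional commutative F-algebra with basis ā_{−1}, ā_0, ā_1 and multiplication ā_i² = ā_i, ā_iā_{i+1} = (−3/4)((α+1)ā_0 + ā_1 + ā_{−1}) + (1/2)(ā_i + ā_{i+1}) for i = 0,−1, and ā_{−1}ā_1 = (1−α)(−3/4)((α+1)ā_0 + ā_1 + ā_{−1}) + (1/2)(ā_1 + ā_{−1}). Then ā_0 is an idempotent whose adjoint action on the algebra is semisimple with eigenvalues contained in {1, 0, −1, 1/2}, and the 1-eigenspace of ā_0 equals Fā_0. -/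

import Mathlib

/-- The `α`-eigenspace of the left-multiplication operator of `a`. -/
noncomputable def esp {F M : Type*} [Field F] [NonUnitalNonAssocCommRing M]
    [Module F M] [SMulCommClass F M M] [IsScalarTower F M M] (a : M) (α : F) :
    Submodule F M :=
  Module.End.eigenspace (LinearMap.mul F M a) α

/-- in the 3-dimensional algebra `III(-1, 1/2, α)^×` with basis
`ā₋₁, ā₀, ā₁`, the idempotent `ā₀` has semisimple adjoint action with
eigenvalues among `{1, 0, -1, 1/2}` and 1-eigenspace exactly `F ā₀`. -/
theorem stmt18 {F M : Type*} [Field F] [NonUnitalNonAssocCommRing M]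
    [Module F M] [SMulCommClass F M M] [IsScalarTower F M M]
    (hchar2 : (2 : F) ≠ 0) (hchar3 : (3 : F) ≠ 0) (α : F)
    (b : ℤ → M)
    (hli : LinearIndependent F ![b (-1), b 0, b 1])
    (hspan : Submodule.span F ({b (-1), b 0, b 1} : Set M) = ⊤)
    (hidem : ∀ i ∈ ({-1, 0, 1} : Set ℤ), b i * b i = b i)
    (hadj : ∀ i ∈ ({0, -1} : Set ℤ), b i * b (i + 1) =
      (-3 / 4 : F) • ((α + 1) • b 0 + b 1 + b (-1)) + (1 / 2 : F) • (b i + b (i + 1)))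
    (hout : b (-1) * b 1 =
      (1 - α) • ((-3 / 4 : F) • ((α + 1) • b 0 + b 1 + b (-1))) +
        (1 / 2 : F) • (b 1 + b (-1))) :
    b 0 * b 0 = b 0 ∧
    esp (b 0) (1 : F) = Submodule.span F {b 0} ∧
    esp (b 0) (1 : F) ⊔ esp (b 0) (0 : F) ⊔ esp (b 0) (-1 : F) ⊔
      esp (b 0) (1 / 2 : F) = ⊤ := by
  have h4 : (4 : F) ≠ 0 := by
    have e : (4 : F) = 2 ^ 2 := by norm_num
    rw [e]; exact pow_ne_zero _ hchar2
  have h8 : (8 : F) ≠ 0 := by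
    have e : (8 : F) = 2 ^ 3 := by norm_num
    rw [e]; exact pow_ne_zero _ hchar2
  have h16 : (16 : F) ≠ 0 := by
    have e : (16 : F) = 2 ^ 4 := by norm_num
    rw [e]; exact pow_ne_zero _ hchar2
  have h00 : b 0 * b 0 = b 0 := hidem 0 (by simp)
  have h01 : b 0 * b 1 =
      (-3 / 4 : F) • ((α + 1) • b 0 + b 1 + b (-1)) + (1 / 2 : F) • (b 0 + b 1) := by
    have h := hadj 0 (by simp)
    simpa using h
  have hm0 : b 0 * b (-1) =
      (-3 / 4 : F) • ((α + 1) • b 0 + b 1 + b (-1)) + (1 / 2 : F) • (b (-1) + b 0) := by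
    have h := hadj (-1) (by simp)
    rw [mul_comm]
    simpa using h
  have c34 : (4 : F) * (-3 / 4) = -3 := by field_simp
  have c12 : (4 : F) * (1 / 2) = 2 := by field_simp; ring
  -- fraction-free product formulas
  have P1 : (4 : F) • (b 0 * b 1) =
      (-3 : F) • ((α + 1) • b 0 + b 1 + b (-1)) + (2 : F) • (b 0 + b 1) := by
    rw [h01, smul_add, smul_smul, smul_smul, c34, c12]
  have Pm : (4 : F) • (b 0 * b (-1)) =
      (-3 : F) • ((α + 1) • b 0 + b 1 + b (-1)) + (2 : F) • (b (-1) + b 0) := by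
    rw [hm0, smul_add, smul_smul, smul_smul, c34, c12]
  -- the eigenvectors
  set v : M := (4 : F) • (b 1 + b (-1)) + (3 * α + 1) • b 0 with hv
  set d : M := b 1 - b (-1) with hd
  have m1 : b 0 ∈ esp (b 0) (1 : F) := by
    rw [esp, Module.End.mem_eigenspace_iff, LinearMap.mul_apply', h00, one_smul]
  have mv : v ∈ esp (b 0) (-1 : F) := by
    rw [esp, Module.End.mem_eigenspace_iff, LinearMap.mul_apply', hv]
    rw [mul_add, mul_smul_comm, mul_smul_comm, mul_add]
    have expand : b 0 * b 1 + b 0 * b (-1) = b 0 * b 1 + b 0 * b (-1) := rfl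
    linear_combination (norm := module) P1 + Pm + (3 * α + 1 : F) • h00
  have md : d ∈ esp (b 0) ((1 : F) / 2) := by
    rw [esp, Module.End.mem_eigenspace_iff, LinearMap.mul_apply', hd]
    rw [mul_sub, h01, hm0]
    module
  refine ⟨h00, ?_, ?_⟩
  · -- esp 1 = span {b 0}
    apply le_antisymm
    · intro x hx
      rw [esp, Module.End.mem_eigenspace_iff, LinearMap.mul_apply', one_smul] at hx
      -- get coordinates of x
      have hxT : x ∈ Submodule.span F ({b (-1), b 0, b 1} : Set M) := by
        rw [hspan]; exact Submodule.mem_top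
      rw [Submodule.mem_span_insert] at hxT
      obtain ⟨p, z, hz, hxz⟩ := hxT
      rw [Submodule.mem_span_pair] at hz
      obtain ⟨q, r, hz'⟩ := hz
      rw [← hz'] at hxz
      -- key linear relation
      have e1 : (4 : F) • (b 0 * x) =
          p • ((4 : F) • (b 0 * b (-1))) + (4 * q) • (b 0 * b 0) +
            r • ((4 : F) • (b 0 * b 1)) := by
        rw [hxz, mul_add, mul_add, mul_smul_comm, mul_smul_comm, mul_smul_comm]
        module
      rw [Pm, P1, h00, hx, hxz] at e1
      have key : (-(5 * p) - 3 * r) • b (-1) + ((p + r) * (-3 * α - 1)) • b 0 +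
          (-(3 * p) - 5 * r) • b 1 = 0 := by
        linear_combination (norm := module) (-1 : F) • e1
      have hg : ∑ i : Fin 3,
          (![-(5 * p) - 3 * r, (p + r) * (-3 * α - 1), -(3 * p) - 5 * r] i) •
            (![b (-1), b 0, b 1] i) = 0 := by
        simpa [Fin.sum_univ_three] using key
      have hc := Fintype.linearIndependent_iff.mp hli _ hg
      have h1 : -(5 * p) - 3 * r = 0 := by simpa using hc 0
      have h3 : -(3 * p) - 5 * r = 0 := by simpa using hc 2
      have hp : p = 0 := by
        have h16p : (16 : F) * p = 0 := by linear_combination (-5 : F) * h1 + (3 : F) * h3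
        exact (mul_eq_zero.mp h16p).resolve_left h16
      have hr : r = 0 := by
        have h16r : (16 : F) * r = 0 := by linear_combination (3 : F) * h1 + (-5 : F) * h3
        exact (mul_eq_zero.mp h16r).resolve_left h16
      rw [Submodule.mem_span_singleton]
      exact ⟨q, by rw [hxz, hp, hr]; simp⟩
    · rw [Submodule.span_le, Set.singleton_subset_iff]
      exact m1
  · -- the sup is everything
    set S : Submodule F M := esp (b 0) (1 : F) ⊔ esp (b 0) (0 : F) ⊔ esp (b 0) (-1 : F) ⊔
      esp (b 0) (1 / 2 : F) with hS
    have hb0S : b 0 ∈ S := by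
      apply Submodule.mem_sup_left; apply Submodule.mem_sup_left
      exact Submodule.mem_sup_left m1
    have hvS : v ∈ S := Submodule.mem_sup_left (Submodule.mem_sup_right mv)
    have hdS : d ∈ S := Submodule.mem_sup_right md
    rw [eq_top_iff, ← hspan, Submodule.span_le]
    rintro y (rfl | rfl | rfl)
    · -- b (-1)
      have e : (8 : F) • b (-1) = v + (-4 : F) • d + (-(3 * α + 1)) • b 0 := by
        rw [hv, hd]; module
      have e2 : b (-1) = (8 : F)⁻¹ • ((8 : F) • b (-1)) := by
        rw [smul_smul, inv_mul_cancel₀ h8, one_smul]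
      rw [e2, e]
      exact S.smul_mem _ (S.add_mem (S.add_mem hvS (S.smul_mem _ hdS)) (S.smul_mem _ hb0S))
    · exact hb0S
    · -- b 1
      have e : (8 : F) • b 1 = v + (4 : F) • d + (-(3 * α + 1)) • b 0 := by
        rw [hv, hd]; module
      have e2 : b 1 = (8 : F)⁻¹ • ((8 : F) • b 1) := by
        rw [smul_smul, inv_mul_cancel₀ h8, one_smul]
      rw [e2, e]
      exact S.smul_mem _ (S.add_mem (S.add_mem hvS (S.smul_mem _ hdS)) (S.smul_mem _ hb0S))
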